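/- If x is a positive integer that is smaller than every prime factor of a₁ and x ≤ a₁ − 1, then ω_x ≤ x·ω₁. -/
import Mathlib


theorem stmt5
    (d : ℕ) (hd : 2 ≤ d)
    (a : Fin d → ℕ)
    (ha_pos : ∀ i, 0 < a i)
    (ha_mono : StrictMono a)
    (ha_gcd : Finset.univ.gcd a = 1)
    (a1 : ℕ) (ha1 : a1 = a ⟨0, by omega⟩)
    (S : Set ℕ)
    (hS : S = {m : ℕ | ∃ c : Fin d → ℕ, m = ∑ i, c i * a i})
    (hmin : ∀ j : Fin d, ¬ ∃ c : Fin d → ℕ, c j = 0 ∧ a j = ∑ i, c i * a i)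
    (F : ℕ) (hF : F ∉ S) (hFmax : ∀ m : ℕ, F < m → m ∈ S)
    (ω : ℕ → ℕ)
    (hω_mono : ∀ i j : ℕ, i < j → j < a1 → ω i < ω j)
    (hω_range : ω '' Set.Iio a1 = {w ∈ S | ¬ ∃ s ∈ S, s + a1 = w})
    (x : ℕ) (hx : 0 < x) (hxp : ∀ p : ℕ, p.Prime → p ∣ a1 → x < p)
    (hxa : x ≤ a1 - 1)
    :
    ω x ≤ x * ω 1 := by
  classical
  have ha1pos : 0 < a1 := by rw [ha1]; exact ha_pos _
  have ha1two : 2 ≤ a1 := by omega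
  have hx_lt : x < a1 := by omega
  -- multiples of a1 lie in S
  have hmul : ∀ k : ℕ, k * a1 ∈ S := by
    intro k
    rw [hS]
    refine ⟨fun i => if i = ⟨0, by omega⟩ then k else 0, ?_⟩
    rw [Finset.sum_eq_single (⟨0, by omega⟩ : Fin d)]
    · simp [ha1]
    · intro b _ hb; simp [hb]
    · simp
  have hadd : ∀ m n : ℕ, m ∈ S → n ∈ S → m + n ∈ S := by
    intro m n hm hn
    rw [hS] at hm hn ⊢
    obtain ⟨c, rfl⟩ := hm
    obtain ⟨c', rfl⟩ := hn
    exact ⟨c + c', by simp [add_mul, Finset.sum_add_distrib]⟩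
  have hS0 : 0 ∈ S := by simpa using hmul 0
  have hsmul : ∀ k m : ℕ, m ∈ S → k * m ∈ S := by
    intro k m hm
    induction k with
    | zero => simpa using hS0
    | succ n ih => have := hadd _ _ ih hm; simpa [Nat.succ_mul] using this
  -- ω 1 is an Apery element
  have hω1A : ω 1 ∈ {w ∈ S | ¬ ∃ s ∈ S, s + a1 = w} := by
    rw [← hω_range]; exact ⟨1, by simpa using by omega, rfl⟩
  have hω0A : ω 0 ∈ {w ∈ S | ¬ ∃ s ∈ S, s + a1 = w} := by
    rw [← hω_range]; exact ⟨0, by simpa using by omega, rfl⟩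
  have hω1S : ω 1 ∈ S := hω1A.1
  have hω1pos : 0 < ω 1 := by
    have := hω_mono 0 1 (by omega) (by omega); omega
  -- a1 does not divide ω 1
  have hnd : ¬ a1 ∣ ω 1 := by
    rintro ⟨t, ht⟩
    have ht1 : 1 ≤ t := by
      rcases Nat.eq_zero_or_pos t with h | h
      · subst h; simp at ht; omega
      · exact h
    refine hω1A.2 ⟨(t - 1) * a1, ?_, ?_⟩
    · exact hmul _
    · have : (t - 1) * a1 + a1 = t * a1 := by
        cases t with
        | zero => omega
        | succ n => simp [Nat.succ_mul]
      rw [this, ht, mul_comm]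
  -- the minimal element of S in each residue class k * ω 1 mod a1
  have hex : ∀ k : ℕ, ∃ m : ℕ, m ∈ S ∧ m % a1 = (k * ω 1) % a1 :=
    fun k => ⟨k * ω 1, hsmul k _ hω1S, rfl⟩
  set m : ℕ → ℕ := fun k => Nat.find (hex k) with hmdef
  have hmS : ∀ k, m k ∈ S := fun k => (Nat.find_spec (hex k)).1
  have hmres : ∀ k, m k % a1 = (k * ω 1) % a1 := fun k => (Nat.find_spec (hex k)).2
  have hmle : ∀ k, m k ≤ k * ω 1 := fun k => Nat.find_min' (hex k) ⟨hsmul k _ hω1S, rfl⟩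
  have hmA : ∀ k, m k ∈ {w ∈ S | ¬ ∃ s ∈ S, s + a1 = w} := by
    intro k
    refine ⟨hmS k, ?_⟩
    rintro ⟨s, hs, hsum⟩
    have hslt : s < m k := by omega
    have hsres : s % a1 = (k * ω 1) % a1 := by
      have : m k % a1 = s % a1 := by rw [← hsum, Nat.add_mod_right]
      rw [← this]; exact hmres k
    exact Nat.find_min (hex k) hslt ⟨hs, hsres⟩
  -- residue distinctness
  have hres : ∀ k k' : ℕ, k ≤ x → k' ≤ x → (k * ω 1) % a1 = (k' * ω 1) % a1 → k = k' := by
    have key : ∀ k k' : ℕ, k ≤ k' → k' ≤ x → (k * ω 1) % a1 = (k' * ω 1) % a1 → k = k' := by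
      intro k k' hkk' hk'x hmod
      by_contra hne
      set e := k' - k with he
      have hepos : 0 < e := by omega
      have hdvd : a1 ∣ k' * ω 1 - k * ω 1 :=
        (Nat.modEq_iff_dvd' (Nat.mul_le_mul_right _ hkk')).mp hmod
      have hsub : k' * ω 1 - k * ω 1 = e * ω 1 := by
        rw [he, Nat.sub_mul]
      rw [hsub] at hdvd
      have hcop : Nat.Coprime a1 e := by
        by_contra hc
        have hgpos : 0 < Nat.gcd a1 e := Nat.gcd_pos_of_pos_left e ha1pos
        have hg2 : 2 ≤ Nat.gcd a1 e := by
          have h1 : Nat.gcd a1 e ≠ 1 := hc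
          omega
        set p := (Nat.gcd a1 e).minFac with hp
        have hpp : p.Prime := Nat.minFac_prime (by omega)
        have hpa1 : p ∣ a1 := dvd_trans (Nat.minFac_dvd _) (Nat.gcd_dvd_left _ _)
        have hpe : p ∣ e := dvd_trans (Nat.minFac_dvd _) (Nat.gcd_dvd_right _ _)
        have hxlt : x < p := hxp p hpp hpa1
        have : p ≤ e := Nat.le_of_dvd hepos hpe
        omega
      have : a1 ∣ ω 1 := hcop.dvd_of_dvd_mul_left hdvd
      exact hnd this
    intro k k' hk hk' hmod
    rcases Nat.le_total k k' with h | h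
    · exact key k k' h hk' hmod
    · exact (key k' k h hk hmod.symm).symm
  -- indices
  have hidx : ∀ k : Fin (x + 1), ∃ i : ℕ, i < a1 ∧ ω i = m k := by
    intro k
    have := hmA k
    rw [← hω_range] at this
    obtain ⟨i, hi, hωi⟩ := this
    exact ⟨i, hi, hωi⟩
  choose idx hidx_lt hidx_eq using hidx
  have hinj : Function.Injective idx := by
    intro k k' hkk'
    have h1 : m (k : ℕ) = m (k' : ℕ) := by rw [← hidx_eq k, ← hidx_eq k', hkk']
    have h2 : ((k : ℕ) * ω 1) % a1 = ((k' : ℕ) * ω 1) % a1 := by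
      rw [← hmres, ← hmres, h1]
    have : (k : ℕ) = (k' : ℕ) :=
      hres _ _ (by omega) (by omega) h2
    exact Fin.ext this
  -- pigeonhole: some index is at least x
  have hpig : ∃ k : Fin (x + 1), x ≤ idx k := by
    by_contra hcon
    push_neg at hcon
    have hginj : Function.Injective (fun k : Fin (x + 1) => (⟨idx k, hcon k⟩ : Fin x)) := by
      intro k k' h
      exact hinj (by simpa using congrArg Fin.val h)
    have := Fintype.card_le_of_injective _ hginj
    simp at this
  obtain ⟨k, hk⟩ := hpig
  have hfin : ω x ≤ ω (idx k) := by
    rcases Nat.eq_or_lt_of_le hk with h | h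
    · rw [h]
    · exact le_of_lt (hω_mono x (idx k) h (hidx_lt k))
  calc ω x ≤ ω (idx k) := hfin
    _ = m k := hidx_eq k
    _ ≤ (k : ℕ) * ω 1 := hmle k
    _ ≤ x * ω 1 := Nat.mul_le_mul_right _ (by omega)
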